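/- Let m ≥ 3 be an integer and let D be a positive integer with gcd(D, m) = 1. Then the Diophantine equation D·x² + 1 = 2·m^y has only finitely many solutions in positive integers (x, y). -/

import Mathlib

/-!
We prove that the equation `D x² + 1 = 2 mʸ` has finitely many positive solutions `(x, y)`.

Strategy: a solution `(x, y)` with `y = 2a + r` (`r = y % 2`) gives rise to the solution
`X = 4 mʸ - 1`, `Y = 2 mᵃ x` of the Pell equation `X² - d Y² = 1` with `d = 2 D mʳ`.
By Mathlib's theory of Pell equations, `(X, Y)` is a power `fᴺ` of the fundamental solution `f`.
An elementary "lifting the exponent" analysis of the `p`-adic valuation of the Lucas-type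
divisibility sequence `N ↦ (fᴺ).y` (for a prime `p ∣ m`) shows that the valuation grows at most
like `const + v_p(N)`, while `p^a` divides `Y` and `2^N ≤ X ≈ 4 mʸ`; together these force `a`,
hence `y`, to be bounded.
-/

namespace PellLTEAux

open Pell Pell.Solution₁

variable {d : ℤ}

private lemma coeff_aux (X : ℤ) : ∀ k : ℕ, (k : ℤ) * X ^ (k - 1) * X = k * X ^ k := by
  intro k
  cases k with
  | zero => simp
  | succ j => rw [Nat.succ_sub_one, pow_succ]; push_cast; ring

/-- binomial-free expansion of coordinates of `g ^ k`. -/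
lemma pow_coords (g : Pell.Solution₁ d) : ∀ k : ℕ, ∃ t t' : ℤ,
    (g ^ k).x = g.x ^ k + d * g.y ^ 2 * t' ∧
    (g ^ k).y = g.y * (k * g.x ^ (k - 1) + d * g.y ^ 2 * t) := by
  intro k
  induction k with
  | zero => exact ⟨0, 0, by simp, by simp⟩
  | succ k ih =>
    obtain ⟨t, t', hx, hy⟩ := ih
    refine ⟨t' + t * g.x, t' * g.x + (k : ℤ) * g.x ^ (k - 1) + d * g.y ^ 2 * t, ?_, ?_⟩
    · rw [pow_succ, x_mul, hx, hy]
      ring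
    · rw [pow_succ, y_mul, hx, hy]
      have h1 : (k : ℤ) * g.x ^ (k - 1) * g.x = k * g.x ^ k := coeff_aux g.x k
      have h2 : ((k + 1 : ℕ) : ℤ) = (k : ℤ) + 1 := by push_cast; ring
      rw [Nat.add_sub_cancel, h2]
      linear_combination g.y * h1

lemma not_dvd_x {p : ℕ} (hp : p.Prime) (g : Pell.Solution₁ d) (h : (p : ℤ) ∣ g.y) :
    ¬ (p : ℤ) ∣ g.x := by
  intro hx
  have hprop := g.prop
  have h1 : (p : ℤ) ∣ g.x ^ 2 := Dvd.dvd.pow hx two_ne_zero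
  have h2 : (p : ℤ) ∣ d * g.y ^ 2 := Dvd.dvd.mul_left (Dvd.dvd.pow h two_ne_zero) d
  have : (p : ℤ) ∣ 1 := hprop ▸ dvd_sub h1 h2
  have h3 : (p : ℤ) ≤ 1 := Int.le_of_dvd one_pos this
  have h4 := hp.two_le
  omega

/-- multiplying the index by something coprime to `p` preserves the exact `p`-valuation. -/
lemma step_coprime {p : ℕ} (hp : p.Prime) (g : Pell.Solution₁ d) {v : ℕ} {c : ℤ}
    (hv : 1 ≤ v) (hgy : g.y = (p : ℤ) ^ v * c) (hc : ¬ (p : ℤ) ∣ c)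
    {k : ℕ} (hk : ¬ (p : ℕ) ∣ k) :
    ∃ c' : ℤ, (g ^ k).y = (p : ℤ) ^ v * c' ∧ ¬ (p : ℤ) ∣ c' := by
  obtain ⟨t, t', hx, hy⟩ := pow_coords g k
  have hpy : (p : ℤ) ∣ g.y := hgy ▸ Dvd.dvd.mul_right (dvd_pow_self _ (by omega)) c
  refine ⟨c * ((k : ℤ) * g.x ^ (k - 1) + d * g.y ^ 2 * t), by rw [hy, hgy]; ring, ?_⟩
  intro hdvd
  have hprime : Prime (p : ℤ) := Nat.prime_iff_prime_int.mp hp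
  rcases hprime.dvd_mul.mp hdvd with h | h
  · exact hc h
  · have hyd : (p : ℤ) ∣ d * g.y ^ 2 * t :=
      Dvd.dvd.mul_right (Dvd.dvd.mul_left (Dvd.dvd.pow hpy two_ne_zero) d) t
    have h2 : (p : ℤ) ∣ (k : ℤ) * g.x ^ (k - 1) := (dvd_add_right hyd).mp (by rwa [add_comm] at h)
    rcases hprime.dvd_mul.mp h2 with h3 | h3
    · exact hk (Int.ofNat_dvd.mp h3)
    · rcases Nat.eq_zero_or_pos (k - 1) with h4 | h4
      · rw [h4, pow_zero] at h3
        have := Int.le_of_dvd one_pos h3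
        have := hp.two_le
        omega
      · exact not_dvd_x hp g hpy (hprime.dvd_of_dvd_pow h3)

/-- multiplying the index by `p` increases the `p`-valuation by exactly one. -/
lemma step_p {p : ℕ} (hp : p.Prime) (g : Pell.Solution₁ d) {v : ℕ} {c : ℤ}
    (hv : 1 ≤ v) (hgy : g.y = (p : ℤ) ^ v * c) (hc : ¬ (p : ℤ) ∣ c) :
    ∃ c' : ℤ, (g ^ p).y = (p : ℤ) ^ (v + 1) * c' ∧ ¬ (p : ℤ) ∣ c' := by
  obtain ⟨t, t', hx, hy⟩ := pow_coords g p
  have hpy : (p : ℤ) ∣ g.y := hgy ▸ Dvd.dvd.mul_right (dvd_pow_self _ (by omega)) c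
  have hprime : Prime (p : ℤ) := Nat.prime_iff_prime_int.mp hp
  have e1 : ((p : ℤ) ^ v) ^ 2 = (p : ℤ) ^ (2 * v) := by
    rw [← pow_mul]; congr 1; omega
  have e2 : (p : ℤ) * (p : ℤ) ^ (2 * v - 1) = (p : ℤ) ^ (2 * v) := by
    rw [← pow_succ']; congr 1; omega
  refine ⟨c * (g.x ^ (p - 1) + (p : ℤ) ^ (2 * v - 1) * (d * c ^ 2 * t)), ?_, ?_⟩
  · rw [hy, hgy]
    linear_combination (d * c ^ 3 * t * (p : ℤ) ^ v) * e1 - (d * c ^ 3 * t * (p : ℤ) ^ v) * e2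
  · intro hdvd
    rcases hprime.dvd_mul.mp hdvd with h | h
    · exact hc h
    · have hE : (p : ℤ) ∣ (p : ℤ) ^ (2 * v - 1) * (d * c ^ 2 * t) :=
        Dvd.dvd.mul_right (dvd_pow_self _ (by omega)) _
      have h2 : (p : ℤ) ∣ g.x ^ (p - 1) := (dvd_add_right hE).mp (by rwa [add_comm] at h)
      have h3 : (p : ℤ) ∣ g.x := hprime.dvd_of_dvd_pow h2
      exact not_dvd_x hp g hpy h3

lemma exists_rank {p : ℕ} (hp : p.Prime) (f : Pell.Solution₁ d) :
    ∃ n : ℕ, 0 < n ∧ (p : ℤ) ∣ (f ^ n).y := by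
  haveI : NeZero p := ⟨hp.pos.ne'⟩
  obtain ⟨i, j, hne, heq⟩ := Finite.exists_ne_map_eq_of_infinite
    (fun n : ℕ => ((((f ^ n).x : ZMod p), ((f ^ n).y : ZMod p))))
  wlog hij : i < j generalizing i j
  · exact this j i hne.symm heq.symm (by omega)
  obtain ⟨hx, hy⟩ := Prod.mk.injEq _ _ _ _ ▸ heq
  refine ⟨j - i, by omega, ?_⟩
  have h1 : f ^ (j - i) * f ^ i = f ^ j := by rw [← pow_add]; congr 1; omega
  have h2 : f ^ (j - i) = f ^ j * (f ^ i)⁻¹ := eq_mul_inv_of_mul_eq h1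
  have h3 : (f ^ (j - i)).y = (f ^ j).x * (-(f ^ i).y) + (f ^ j).y * (f ^ i).x := by
    rw [h2, y_mul, x_inv, y_inv]
  rw [← ZMod.intCast_zmod_eq_zero_iff_dvd]
  push_cast [h3]
  rw [hx, hy]
  ring

/-- `p` divides `y` of all multiples of the rank. -/
lemma rank_dvd_y {p : ℕ} (f : Pell.Solution₁ d) {r : ℕ} (hr : (p : ℤ) ∣ (f ^ r).y) :
    ∀ q : ℕ, (p : ℤ) ∣ (f ^ (r * q)).y := by
  intro q
  induction q with
  | zero => simp
  | succ q ih =>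
    have h1 : f ^ (r * (q + 1)) = f ^ (r * q) * f ^ r := by
      rw [← pow_add, Nat.mul_succ]
    rw [h1, y_mul]
    exact dvd_add (Dvd.dvd.mul_left hr _) (Dvd.dvd.mul_right ih _)

/-- minimality: if `p ∣ (f^N).y` then the minimal positive rank divides `N`. -/
lemma rank_min_dvd {p : ℕ} (hp : p.Prime) (f : Pell.Solution₁ d) {r : ℕ}
    (hr0 : 0 < r) (hr : (p : ℤ) ∣ (f ^ r).y)
    (hmin : ∀ n, 0 < n → n < r → ¬ (p : ℤ) ∣ (f ^ n).y)
    {N : ℕ} (hN : (p : ℤ) ∣ (f ^ N).y) : r ∣ N := by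
  have hprime : Prime (p : ℤ) := Nat.prime_iff_prime_int.mp hp
  set ρ := N % r with hρ
  have hsplit : f ^ N = f ^ (r * (N / r)) * f ^ ρ := by
    rw [← pow_add]; congr 1
    rw [hρ, Nat.div_add_mod]
  have hq : (p : ℤ) ∣ (f ^ (r * (N / r))).y := rank_dvd_y f hr _
  have hqx : ¬ (p : ℤ) ∣ (f ^ (r * (N / r))).x := not_dvd_x hp _ hq
  have h2 : (p : ℤ) ∣ (f ^ (r * (N / r))).x * (f ^ ρ).y := by
    have h3 : (f ^ N).y = (f ^ (r * (N / r))).x * (f ^ ρ).y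
        + (f ^ (r * (N / r))).y * (f ^ ρ).x := by rw [hsplit, y_mul]
    have h4 : (p : ℤ) ∣ (f ^ (r * (N / r))).y * (f ^ ρ).x := Dvd.dvd.mul_right hq _
    have := dvd_sub hN h4
    rwa [h3, add_sub_cancel_right] at this
  have h5 : (p : ℤ) ∣ (f ^ ρ).y := (hprime.dvd_mul.mp h2).resolve_left hqx
  have h6 : ρ = 0 := by
    by_contra h7
    exact hmin ρ (by omega) (Nat.mod_lt _ hr0) h5
  exact Nat.dvd_of_mod_eq_zero h6

/-- growth of the `x`-coordinate of powers of a fundamental solution. -/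
lemma growth {f : Pell.Solution₁ d} (hf : Pell.IsFundamental f) :
    ∀ N : ℕ, (2 : ℤ) ^ N ≤ (f ^ N).x ∧ 0 ≤ (f ^ N).y := by
  intro N
  have hd := hf.d_pos
  have hfx : 2 ≤ f.x := hf.1
  have hfy : 1 ≤ f.y := hf.2.1
  induction N with
  | zero => simp
  | succ N ih =>
    obtain ⟨ih1, ih2⟩ := ih
    have hxpos : (0:ℤ) < (f ^ N).x := lt_of_lt_of_le (by positivity) ih1
    have hxs : (f ^ (N+1)).x = (f ^ N).x * f.x + d * ((f ^ N).y * f.y) := by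
      rw [pow_succ, x_mul]
    have hys : (f ^ (N+1)).y = (f ^ N).x * f.y + (f ^ N).y * f.x := by
      rw [pow_succ, y_mul]
    constructor
    · rw [hxs]
      have h1 : (2:ℤ) ^ N * 2 ≤ (f ^ N).x * f.x :=
        mul_le_mul ih1 hfx (by norm_num) hxpos.le
      have h2 : (2:ℤ) ^ (N+1) = 2 ^ N * 2 := by ring
      nlinarith [mul_nonneg (mul_nonneg hd.le ih2) (by omega : (0:ℤ) ≤ f.y)]
    · rw [hys]
      nlinarith
/-- Core bound: any positive Pell solution whose `y` is divisible by a large power of `p`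
must have a huge `x`. -/
theorem core (p : ℕ) (hp : p.Prime) (d : ℤ) (hd : 1 ≤ d) :
    ∃ A : ℕ, ∀ X Y : ℤ, X ^ 2 - d * Y ^ 2 = 1 → 1 ≤ X → 1 ≤ Y →
      ∀ k : ℕ, (p : ℤ) ^ k ∣ Y → (2 : ℤ) ^ (2 ^ (k - A)) ≤ X := by
  classical
  by_cases hsq : IsSquare d
  · refine ⟨0, fun X Y hXY hX hY k hk => absurd hXY ?_⟩
    obtain ⟨c, hc⟩ := hsq
    intro hXY
    have h1 : (X - c * Y) * (X + c * Y) = 1 := by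
      rw [hc] at hXY; linear_combination hXY
    have hc0 : c ≠ 0 := by
      intro h; rw [h] at hc; simp at hc; omega
    rcases Int.eq_one_or_neg_one_of_mul_eq_one' h1 with ⟨ha, hb⟩ | ⟨ha, hb⟩ <;>
    · have h2 : c * Y = 0 := by omega
      rcases mul_eq_zero.mp h2 with h | h
      · exact hc0 h
      · omega
  · have h0 : (0 : ℤ) < d := by omega
    obtain ⟨f, hf⟩ := Pell.IsFundamental.exists_of_not_isSquare h0 hsq
    have hrank := exists_rank hp f
    set r := Nat.find hrank with hrdef
    obtain ⟨hr0, hrdvd⟩ := Nat.find_spec hrank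
    rw [← hrdef] at hr0 hrdvd
    have hmin : ∀ n, 0 < n → n < r → ¬ (p : ℤ) ∣ (f ^ n).y := fun n h1 h2 h3 =>
      Nat.find_min hrank h2 ⟨h1, h3⟩
    have hfypos : 0 < (f ^ r).y := by
      have h1 : r = (r - 1) + 1 := by omega
      rw [h1]
      exact y_pow_succ_pos hf.x_pos hf.2.1 (r - 1)
    -- factor out the p-part of (f^r).y
    set n0 := (f ^ r).y.toNat with hn0def
    have hn0pos : 0 < n0 := by omega
    set s := n0.factorization p with hsdef
    have hfact : (f ^ r).y = (p : ℤ) ^ s * (n0 / p ^ s : ℕ) := by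
      have h2 : (p ^ s * (n0 / p ^ s) : ℕ) = n0 := Nat.ordProj_mul_ordCompl_eq_self n0 p
      rw [← Int.toNat_of_nonneg hfypos.le, ← hn0def]
      exact_mod_cast h2.symm
    have hnotdvd : ¬ (p : ℤ) ∣ (n0 / p ^ s : ℕ) := by
      rw [Int.natCast_dvd_natCast]
      exact Nat.not_dvd_ordCompl hp hn0pos.ne'
    have hs1 : 1 ≤ s := by
      rcases Nat.eq_zero_or_pos s with hs0 | h
      · exfalso
        rw [hs0] at hfact hnotdvd
        rw [hfact, pow_zero, one_mul] at hrdvd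
        exact hnotdvd hrdvd
      · exact h
    refine ⟨s, ?_⟩
    intro X Y hXY hX hY k hdvd
    have hX2 : (2 : ℤ) ≤ X := by nlinarith
    by_cases hks : k ≤ s
    · have h1 : k - s = 0 := by omega
      rw [h1]
      simpa using hX2
    · push_neg at hks
      set sol := Pell.Solution₁.mk X Y hXY with hsol
      obtain ⟨N, hN⟩ := hf.eq_pow_of_nonneg (a := sol)
        (by rw [hsol, x_mk]; omega) (by rw [hsol, y_mk]; omega)
      have hYN : (f ^ N).y = Y := by rw [← hN, hsol, y_mk]
      have hXN : (f ^ N).x = X := by rw [← hN, hsol, x_mk]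
      have hNpos : 0 < N := by
        rcases Nat.eq_zero_or_pos N with h | h
        · exfalso
          rw [h, pow_zero, y_one] at hYN
          omega
        · exact h
      have hpY : (p : ℤ) ∣ (f ^ N).y := by
        rw [hYN]
        exact dvd_trans (dvd_pow_self _ (by omega : k ≠ 0)) hdvd
      have hrN : r ∣ N := rank_min_dvd hp f hr0 hrdvd hmin hpY
      obtain ⟨M, hM⟩ := hrN
      have hMpos : 0 < M := by
        rcases Nat.eq_zero_or_pos M with h | h
        · rw [h, mul_zero] at hM; omega
        · exact h
      set j := M.factorization p with hjdef
      set K := M / p ^ j with hKdef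
      have hMfact : M = p ^ j * K := (Nat.ordProj_mul_ordCompl_eq_self M p).symm
      have hKnd : ¬ p ∣ K := Nat.not_dvd_ordCompl hp hMpos.ne'
      -- iterate exact valuation
      have hiter : ∀ i : ℕ, ∃ c : ℤ, (f ^ (r * p ^ i)).y = (p : ℤ) ^ (s + i) * c ∧ ¬ (p : ℤ) ∣ c := by
        intro i
        induction i with
        | zero =>
          refine ⟨(n0 / p ^ s : ℕ), ?_, hnotdvd⟩
          rw [pow_zero, mul_one, add_zero]
          exact hfact
        | succ i ih =>
          obtain ⟨c, hc1, hc2⟩ := ih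
          obtain ⟨c', hc'1, hc'2⟩ := step_p hp (f ^ (r * p ^ i)) (by omega : 1 ≤ s + i) hc1 hc2
          refine ⟨c', ?_, hc'2⟩
          rw [← pow_mul] at hc'1
          have harith : r * p ^ i * p = r * p ^ (i + 1) := by rw [pow_succ]; ring
          rw [harith] at hc'1
          have harith2 : s + i + 1 = s + (i + 1) := by omega
          rw [harith2] at hc'1
          exact hc'1
      obtain ⟨c1, hc1, hc1'⟩ := hiter j
      have hfinal : ∃ c2 : ℤ, (f ^ N).y = (p : ℤ) ^ (s + j) * c2 ∧ ¬ (p : ℤ) ∣ c2 := by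
        obtain ⟨c2, hc2, hc2'⟩ := step_coprime hp (f ^ (r * p ^ j))
          (by omega : 1 ≤ s + j) hc1 hc1' hKnd
        rw [← pow_mul] at hc2
        have harith : r * p ^ j * K = N := by rw [hM, hMfact]; ring
        rw [harith] at hc2
        exact ⟨c2, hc2, hc2'⟩
      obtain ⟨c2, hc2, hc2'⟩ := hfinal
      -- k ≤ s + j
      have hksj : k ≤ s + j := by
        by_contra hcon
        push_neg at hcon
        have h1 : (p : ℤ) ^ (s + j + 1) ∣ (p : ℤ) ^ k := pow_dvd_pow _ (by omega)
        have h2 : (p : ℤ) ^ (s + j + 1) ∣ (p : ℤ) ^ (s + j) * c2 := by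
          rw [← hc2, hYN]
          exact h1.trans hdvd
        have h3 : (p : ℤ) ∣ c2 := by
          have h5 : (p : ℤ) ^ (s + j) * (p : ℤ) ∣ (p : ℤ) ^ (s + j) * c2 := by
            rw [← pow_succ]
            exact h2
          have hne : ((p : ℤ) ^ (s + j)) ≠ 0 :=
            pow_ne_zero _ (Int.natCast_ne_zero.mpr hp.pos.ne')
          exact (mul_dvd_mul_iff_left hne).mp h5
        exact hc2' h3
      -- p^j ≤ N and growth
      have hpjN : p ^ j ≤ N := Nat.le_of_dvd hNpos ⟨r * K, by rw [hM, hMfact]; ring⟩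
      have h2k : 2 ^ (k - s) ≤ N := by
        calc 2 ^ (k - s) ≤ p ^ (k - s) := Nat.pow_le_pow_left hp.two_le _
        _ ≤ p ^ j := Nat.pow_le_pow_right hp.pos (by omega)
        _ ≤ N := hpjN
      calc (2 : ℤ) ^ 2 ^ (k - s) ≤ (2 : ℤ) ^ N := by
            apply pow_le_pow_right₀ (by norm_num) h2k
        _ ≤ (f ^ N).x := (growth hf N).1
        _ = X := hXN

lemma two_mul_add_one_le : ∀ n : ℕ, 3 ≤ n → 2 * n + 1 ≤ 2 ^ n := by
  intro n
  induction n with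
  | zero => omega
  | succ n ih =>
    intro h
    rcases Nat.lt_or_ge n 3 with h' | h'
    · interval_cases n <;> first | omega | norm_num
    · have h1 := ih h'
      have h2 : 2 ^ (n + 1) = 2 ^ n + 2 ^ n := by rw [pow_succ]; omega
      omega

lemma sq_le_two_pow : ∀ n : ℕ, 4 ≤ n → n ^ 2 ≤ 2 ^ n := by
  intro n
  induction n with
  | zero => omega
  | succ n ih =>
    intro h
    rcases Nat.lt_or_ge n 4 with h' | h'
    · interval_cases n <;> first | omega | norm_num
    · have h1 := ih h'
      have h2 := two_mul_add_one_le n (by omega)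
      have h3 : (n + 1) ^ 2 = n ^ 2 + (2 * n + 1) := by ring
      have h4 : 2 ^ (n + 1) = 2 ^ n + 2 ^ n := by rw [pow_succ]; omega
      omega

lemma helper7 (m y a : ℕ) (hm : m < 2 ^ m) (h8 : y ≤ 2 * a + 1) :
    2 + m * y ≤ 2 ^ (m + 2) * (a + 1) := by
  have h9 : m * y ≤ m * (2 * a + 1) := Nat.mul_le_mul_left m h8
  have h10 : 2 ^ (m + 2) = 4 * 2 ^ m := by rw [pow_add]; ring
  nlinarith [hm.le]

lemma mul8_le_sq {n : ℕ} (h : 8 ≤ n) : 8 * n ≤ n ^ 2 := by nlinarith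

end PellLTEAux

open PellLTEAux in
/-- For an integer `m ≥ 3` and a positive integer `D` with `gcd(D, m) = 1`, the Diophantine
equation `D x² + 1 = 2 m ^ y` has only finitely many solutions in positive integers. -/
theorem finite_solutions_Dx_sq_add_one
    (m D : ℕ) (hm : 3 ≤ m) (hD : 0 < D) (hgcd : Nat.gcd D m = 1) :
    {xy : ℕ × ℕ | 0 < xy.1 ∧ 0 < xy.2 ∧
      D * xy.1 ^ 2 + 1 = 2 * m ^ xy.2}.Finite := by
  classical
  obtain ⟨p, hp, hpm⟩ : ∃ p : ℕ, p.Prime ∧ p ∣ m :=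
    ⟨m.minFac, Nat.minFac_prime (show m ≠ 1 by omega), Nat.minFac_dvd m⟩
  have hD1 : (1 : ℤ) ≤ (D : ℤ) := by exact_mod_cast hD
  have hmZ : (3 : ℤ) ≤ (m : ℤ) := by exact_mod_cast hm
  obtain ⟨A₀, hA₀⟩ := core p hp (2 * (D : ℤ)) (by linarith)
  obtain ⟨A₁, hA₁⟩ := core p hp (2 * (D : ℤ) * (m : ℤ)) (by nlinarith)
  obtain ⟨A, hA0, hA1'⟩ : ∃ A : ℕ, A₀ ≤ A ∧ A₁ ≤ A :=
    ⟨max A₀ A₁, le_max_left _ _, le_max_right _ _⟩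
  obtain ⟨c, hc⟩ : ∃ c : ℕ, c = A + m + 2 := ⟨_, rfl⟩
  have key : ∀ x y : ℕ, 0 < x → 0 < y → D * x ^ 2 + 1 = 2 * m ^ y →
      y ≤ 2 * (2 * c + 8) + 1 := by
    intro x y hx hy heq
    obtain ⟨a, ha⟩ : ∃ a : ℕ, a = y / 2 := ⟨_, rfl⟩
    have heqZ : (D : ℤ) * (x : ℤ) ^ 2 + 1 = 2 * (m : ℤ) ^ y := by exact_mod_cast heq
    have hm1 : (1 : ℤ) ≤ (m : ℤ) ^ y := one_le_pow₀ (by linarith)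
    have hm1a : (1 : ℤ) ≤ (m : ℤ) ^ a := one_le_pow₀ (by linarith)
    have hxZ : (1 : ℤ) ≤ (x : ℤ) := by exact_mod_cast hx
    have hXpos : (1 : ℤ) ≤ 4 * (m : ℤ) ^ y - 1 := by nlinarith
    have hYpos : (1 : ℤ) ≤ 2 * (m : ℤ) ^ a * (x : ℤ) := by nlinarith
    have hdvd : (p : ℤ) ^ a ∣ 2 * (m : ℤ) ^ a * (x : ℤ) := by
      have h1 : (p : ℤ) ∣ (m : ℤ) := Int.natCast_dvd_natCast.mpr hpm
      exact Dvd.dvd.mul_right (Dvd.dvd.mul_left (pow_dvd_pow_of_dvd h1 a) 2) (x : ℤ)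
    have hbig : (2 : ℤ) ^ 2 ^ (a - A) ≤ 4 * (m : ℤ) ^ y - 1 := by
      rcases Nat.mod_two_eq_zero_or_one y with h2 | h2
      · have hpow : ((m : ℤ) ^ a) ^ 2 = (m : ℤ) ^ y := by
          rw [← pow_mul]; congr 1; omega
        have hprop : (4 * (m : ℤ) ^ y - 1) ^ 2
            - (2 * (D : ℤ)) * (2 * (m : ℤ) ^ a * (x : ℤ)) ^ 2 = 1 := by
          linear_combination (-(8 : ℤ) * (D : ℤ) * (x : ℤ) ^ 2) * hpow
            + (-(8 : ℤ) * (m : ℤ) ^ y) * heqZ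
        have hcore := hA₀ _ _ hprop hXpos hYpos a hdvd
        calc (2 : ℤ) ^ 2 ^ (a - A) ≤ (2 : ℤ) ^ 2 ^ (a - A₀) := by
              apply pow_le_pow_right₀ (by norm_num)
              exact Nat.pow_le_pow_right (by norm_num) (by omega : a - A ≤ a - A₀)
          _ ≤ _ := hcore
      · have hpow : (m : ℤ) * ((m : ℤ) ^ a) ^ 2 = (m : ℤ) ^ y := by
          rw [← pow_mul, ← pow_succ']; congr 1; omega
        have hprop : (4 * (m : ℤ) ^ y - 1) ^ 2
            - (2 * (D : ℤ) * (m : ℤ)) * (2 * (m : ℤ) ^ a * (x : ℤ)) ^ 2 = 1 := by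
          linear_combination (-(8 : ℤ) * (D : ℤ) * (x : ℤ) ^ 2) * hpow
            + (-(8 : ℤ) * (m : ℤ) ^ y) * heqZ
        have hcore := hA₁ _ _ hprop hXpos hYpos a hdvd
        calc (2 : ℤ) ^ 2 ^ (a - A) ≤ (2 : ℤ) ^ 2 ^ (a - A₁) := by
              apply pow_le_pow_right₀ (by norm_num)
              exact Nat.pow_le_pow_right (by norm_num) (by omega : a - A ≤ a - A₁)
          _ ≤ _ := hcore
    by_contra hcon
    push_neg at hcon
    have hage : 2 * c + 8 ≤ a := by omega
    have hbigN : 2 ^ 2 ^ (a - A) ≤ 4 * m ^ y := by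
      have h1 : ((2 ^ 2 ^ (a - A) : ℕ) : ℤ) ≤ ((4 * m ^ y : ℕ) : ℤ) := by
        push_cast
        exact le_trans hbig (sub_le_self _ zero_le_one)
      exact_mod_cast h1
    have hmlt : m < 2 ^ m := Nat.lt_two_pow_self (n := m)
    have h4 : 4 * m ^ y ≤ 2 ^ (2 + m * y) := by
      have h5 : m ^ y ≤ (2 ^ m) ^ y := Nat.pow_le_pow_left hmlt.le y
      have h6 : (4 : ℕ) * (2 ^ m) ^ y = 2 ^ (2 + m * y) := by
        rw [pow_add, ← pow_mul]
        norm_num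
      omega
    have h5 : 2 ^ (a - A) ≤ 2 + m * y :=
      (Nat.pow_le_pow_iff_right (by norm_num)).mp (le_trans hbigN h4)
    have hsplit : (m + 2) + (a - c) ≤ a - A := by omega
    have h6 : 2 ^ (m + 2) * 2 ^ (a - c) ≤ 2 + m * y := by
      rw [← pow_add]
      exact le_trans (Nat.pow_le_pow_right (by norm_num) hsplit) h5
    have h7 : 2 + m * y ≤ 2 ^ (m + 2) * (a + 1) := helper7 m y a hmlt (by omega)
    have h9 : 2 ^ (a - c) ≤ a + 1 := by
      have hpos : 0 < 2 ^ (m + 2) := Nat.pow_pos (by norm_num)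
      have := le_trans h6 h7
      exact Nat.le_of_mul_le_mul_left this hpos
    have h10 : (a - c) ^ 2 ≤ 2 ^ (a - c) := sq_le_two_pow _ (by omega)
    have h11 : 8 * (a - c) ≤ (a - c) ^ 2 := mul8_le_sq (by omega)
    have h13 : 8 * (a - c) ≤ a + 1 := le_trans h11 (le_trans h10 h9)
    omega
  obtain ⟨Yb, hYb⟩ : ∃ Yb : ℕ, Yb = 2 * (2 * c + 8) + 1 := ⟨_, rfl⟩
  rw [← hYb] at key
  have keyx : ∀ x y : ℕ, 0 < x → 0 < y → D * x ^ 2 + 1 = 2 * m ^ y → x ≤ 2 * m ^ Yb := by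
    intro x y hx hy heq
    have h1 := key x y hx hy heq
    have h3 : m ^ y ≤ m ^ Yb := Nat.pow_le_pow_right (by omega) h1
    have hxx : x ≤ x * x := Nat.le_mul_of_pos_left x hx
    have h5 : x * x = x ^ 2 := (sq x).symm
    have h6 : x ^ 2 ≤ D * x ^ 2 := Nat.le_mul_of_pos_left _ hD
    omega
  apply Set.Finite.subset ((Set.finite_Iic (2 * m ^ Yb)).prod (Set.finite_Iic Yb))
  rintro ⟨x, y⟩ ⟨h1, h2, h3⟩
  exact ⟨keyx x y h1 h2 h3, key x y h1 h2 h3⟩
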